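/- Let (B, Θ) be a category with a structure of nullhomotopies satisfying the reduced interchange condition, with a Θ-strong zero object, strong Θ-kernels of all arrows, and strong Θ-cokernels of all terminal arrows. For every arrow g : X → Y with Θ-kernel (N(g), n_g, ν_g), each pair of consecutive arrows in the snail sequence N(0_{N(g)}) →^{n(n_g)} N(0_X) →^{n(g)} N(0_Y) →^{δ} π₀(N(g)) →^{π₀(n_g)} π₀(X) →^{π₀(g)} π₀(Y) composes to the zero arrow. -/
import Mathlib


open CategoryTheory CategoryTheory.Limits

noncomputable section

universe v u

/-- A structure of nullhomotopies `Θ` on a category `B` (Grandis).  We encode the family of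
sets `Θ(g)`, for `g : X ⟶ Y`, as a total space `H X Y` together with a projection `ar`
assigning to every nullhomotopy the arrow on which it lives; thus `Θ(g) = {φ : H X Y // ar φ = g}`.
The maps `f ∘ - ∘ h : Θ(g) → Θ(f·g·h)` are encoded by `act`. -/
structure NullStruct (B : Type u) [Category.{v} B] where
  H : B → B → Type v
  ar : ∀ {X Y : B}, H X Y → (X ⟶ Y)
  act : ∀ {A X Y D : B}, (A ⟶ X) → H X Y → (Y ⟶ D) → H A D
  ar_act : ∀ {A X Y D : B} (f : A ⟶ X) (φ : H X Y) (h : Y ⟶ D),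
      ar (act f φ h) = f ≫ ar φ ≫ h
  act_id : ∀ {X Y : B} (φ : H X Y), act (𝟙 X) φ (𝟙 Y) = φ
  act_comp : ∀ {A' A X Y D D' : B} (f' : A' ⟶ A) (f : A ⟶ X) (φ : H X Y)
      (h : Y ⟶ D) (h' : D ⟶ D'),
      act (f' ≫ f) φ (h ≫ h') = act f' (act f φ h) h'

namespace NullStruct

variable {B : Type u} [Category.{v} B]

/-- The reduced interchange condition: `α ∘ g = f ∘ β` for `α ∈ Θ(f)`, `β ∈ Θ(g)`. -/
def ReducedInterchange (Θ : NullStruct B) : Prop :=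
  ∀ {A X Y : B} (f : A ⟶ X) (g : X ⟶ Y) (α : Θ.H A X) (β : Θ.H X Y),
    Θ.ar α = f → Θ.ar β = g → Θ.act (𝟙 A) α g = Θ.act f β (𝟙 Y)

/-- `(N, n, ν)` is a Θ-kernel of `g`. -/
structure IsKer (Θ : NullStruct B) {N X Y : B} (g : X ⟶ Y) (n : N ⟶ X) (ν : Θ.H N Y) : Prop where
  ar_eq : Θ.ar ν = n ≫ g
  lift : ∀ {A : B} (f : A ⟶ X) (φ : Θ.H A Y), Θ.ar φ = f ≫ g →
    ∃! f' : A ⟶ N, f' ≫ n = f ∧ Θ.act f' ν (𝟙 Y) = φ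

/-- `(N, n, ν)` is a strong Θ-kernel of `g`. -/
structure IsStrongKer (Θ : NullStruct B) {N X Y : B} (g : X ⟶ Y) (n : N ⟶ X) (ν : Θ.H N Y)
    extends NullStruct.IsKer Θ g n ν : Prop where
  liftH : ∀ {A : B} (f : A ⟶ N) (φ : Θ.H A X), Θ.ar φ = f ≫ n →
    Θ.act (𝟙 A) φ g = Θ.act f ν (𝟙 Y) →
    ∃! φ' : Θ.H A N, Θ.ar φ' = f ∧ Θ.act (𝟙 A) φ' n = φ

/-- `(Q, c, γ)` is a Θ-cokernel of `g`. -/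
structure IsCoker (Θ : NullStruct B) {X Y Q : B} (g : X ⟶ Y) (c : Y ⟶ Q) (γ : Θ.H X Q) : Prop where
  ar_eq : Θ.ar γ = g ≫ c
  desc : ∀ {D : B} (f : Y ⟶ D) (φ : Θ.H X D), Θ.ar φ = g ≫ f →
    ∃! f' : Q ⟶ D, c ≫ f' = f ∧ Θ.act (𝟙 X) γ f' = φ

/-- `(Q, c, γ)` is a strong Θ-cokernel of `g`. -/
structure IsStrongCoker (Θ : NullStruct B) {X Y Q : B} (g : X ⟶ Y) (c : Y ⟶ Q) (γ : Θ.H X Q)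
    extends NullStruct.IsCoker Θ g c γ : Prop where
  descH : ∀ {D : B} (f : Q ⟶ D) (φ : Θ.H Y D), Θ.ar φ = c ≫ f →
    Θ.act g φ (𝟙 D) = Θ.act (𝟙 X) γ f →
    ∃! φ' : Θ.H Q D, Θ.ar φ' = f ∧ Θ.act c φ' (𝟙 D) = φ

/-- A Θ-strong zero object: a zero object `Z` such that, for every `X`, the sets of
nullhomotopies `Θ(X ⟶ Z)` and `Θ(Z ⟶ X)` are singletons. -/
structure StrongZero (Θ : NullStruct B) where
  Z : B
  isZero : IsZero Z
  toZ : ∀ X : B, Θ.H X Z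
  toZ_uniq : ∀ (X : B) (φ : Θ.H X Z), φ = toZ X
  fromZ : ∀ X : B, Θ.H Z X
  fromZ_uniq : ∀ (X : B) (φ : Θ.H Z X), φ = fromZ X

/-- The zero arrow `X ⟶ Z ⟶ Y` through the Θ-strong zero object. -/
def StrongZero.zero {Θ : NullStruct B} (ζ : Θ.StrongZero) (X Y : B) : X ⟶ Y :=
  ζ.isZero.from_ X ≫ ζ.isZero.to_ Y

/-- The canonical nullhomotopy `*` on the zero arrow `X ⟶ Z ⟶ Y`. -/
def StrongZero.star {Θ : NullStruct B} (ζ : Θ.StrongZero) (X Y : B) : Θ.H X Y :=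
  Θ.act (𝟙 X) (ζ.toZ X) (ζ.isZero.to_ Y)

/-- An object `Y` is discrete: every nullhomotopy with codomain `Y` lives on the zero arrow
and is the canonical one (i.e. `Θ(g) = ∅` if `g ≠ 0`, and `Θ(0) = {*}`). -/
def IsDiscrete {Θ : NullStruct B} (ζ : Θ.StrongZero) (Y : B) : Prop :=
  ∀ (X : B) (φ : Θ.H X Y), Θ.ar φ = ζ.zero X Y ∧ φ = ζ.star X Y

/-- Codiscrete objects: dual of discrete. -/
def IsCodiscrete {Θ : NullStruct B} (ζ : Θ.StrongZero) (X : B) : Prop :=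
  ∀ (Y : B) (φ : Θ.H X Y), Θ.ar φ = ζ.zero X Y ∧ φ = ζ.star X Y

/-- `k` is a categorical kernel of `g` (with respect to the zero arrows through the
Θ-strong zero object). -/
def IsCatKer {Θ : NullStruct B} (ζ : Θ.StrongZero) {K X Y : B} (k : K ⟶ X) (g : X ⟶ Y) : Prop :=
  k ≫ g = ζ.zero K Y ∧
  ∀ {W : B} (w : W ⟶ X), w ≫ g = ζ.zero W Y → ∃! w' : W ⟶ K, w' ≫ k = w

/-- `(f, φ, g)` is S-exact: any factorization of `(f, φ)` through a Θ-kernel of `g`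
belongs to `S`. -/
def SExact (Θ : NullStruct B) (S : ∀ ⦃X Y : B⦄, (X ⟶ Y) → Prop)
    {W X Y : B} (f : W ⟶ X) (φ : Θ.H W Y) (g : X ⟶ Y) : Prop :=
  ∀ {N : B} (n : N ⟶ X) (ν : Θ.H N Y), Θ.IsKer g n ν →
    ∀ (w : W ⟶ N), w ≫ n = f → Θ.act w ν (𝟙 Y) = φ → S w

/-- `Y` is S-proper relative to the canonical arrow `η : Y ⟶ π₀(Y)`: the canonical
comparison `N(id_Y) ⟶ N(η_Y)` belongs to `S`. -/
def SProper (Θ : NullStruct B) (S : ∀ ⦃X Y : B⦄, (X ⟶ Y) → Prop)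
    {Y P : B} (η : Y ⟶ P) : Prop :=
  ∀ {NI : B} (nI : NI ⟶ Y) (νI : Θ.H NI Y), Θ.IsKer (𝟙 Y) nI νI →
  ∀ {NE : B} (nE : NE ⟶ Y) (νE : Θ.H NE P), Θ.IsKer η nE νE →
  ∀ (w : NI ⟶ NE), w ≫ nE = nI → Θ.act w νE (𝟙 P) = Θ.act (𝟙 NI) νI η → S w

/-- Condition (Sub) on a class `S` of arrows. -/
def CondSub {Θ : NullStruct B} (ζ : Θ.StrongZero) (S : ∀ ⦃X Y : B⦄, (X ⟶ Y) → Prop) : Prop :=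
  ∀ ⦃X Y X₀ Y₀ : B⦄ (g : X ⟶ Y) (g₀ : X₀ ⟶ Y₀) (x : X ⟶ X₀) (y : Y ⟶ Y₀),
    g ≫ y = x ≫ g₀ →
    ∀ ⦃Kg Kg₀ Kx Ky : B⦄ (kg : Kg ⟶ X) (kg₀ : Kg₀ ⟶ X₀) (kx : Kx ⟶ X) (ky : Ky ⟶ Y),
      IsCatKer ζ kg g → IsCatKer ζ kg₀ g₀ → IsCatKer ζ kx x → IsCatKer ζ ky y →
      ∀ (u : Kg ⟶ Kg₀) (v : Kx ⟶ Ky),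
        u ≫ kg₀ = kg ≫ x → v ≫ ky = kx ≫ g → S g → S u → S v

end NullStruct

open NullStruct

section Helpers

variable {B : Type u} [Category.{v} B] {Θ : NullStruct B}

/-- Fuse two actions into one. -/
lemma act_fuse {A' A X Y D D' : B} (f' : A' ⟶ A) (f : A ⟶ X) (φ : Θ.H X Y)
    (h : Y ⟶ D) (h' : D ⟶ D') :
    Θ.act f' (Θ.act f φ h) h' = Θ.act (f' ≫ f) φ (h ≫ h') := (Θ.act_comp f' f φ h h').symm

/-- Split an action on the left. -/
lemma act_splitL {A' A X Y D : B} (f' : A' ⟶ A) (f : A ⟶ X) (φ : Θ.H X Y) (h : Y ⟶ D) :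
    Θ.act (f' ≫ f) φ h = Θ.act f' (Θ.act f φ (𝟙 Y)) h := by
  have := Θ.act_comp f' f φ (𝟙 Y) h
  simpa using this

/-- Split an action on the right. -/
lemma act_splitR {A X Y D D' : B} (f : A ⟶ X) (φ : Θ.H X Y) (h : Y ⟶ D) (h' : D ⟶ D') :
    Θ.act f φ (h ≫ h') = Θ.act (𝟙 A) (Θ.act f φ h) h' := by
  have := Θ.act_comp (𝟙 A) f φ h h'
  simpa using this

/-- Any two nullhomotopies between `A` and the zero object on either side coincide, hence
the "crossing" identity holds. -/
lemma act_cross (hRI : Θ.ReducedInterchange) (ζ : Θ.StrongZero) {A C : B}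
    (α : Θ.H A ζ.Z) (β : Θ.H ζ.Z C) (a : A ⟶ ζ.Z) (b : ζ.Z ⟶ C) :
    Θ.act (𝟙 A) α b = Θ.act a β (𝟙 C) :=
  hRI a b α β (ζ.isZero.eq_of_tgt _ _) (ζ.isZero.eq_of_src _ _)

/-- Acting by the zero arrow is acting by anything through the zero object. -/
lemma zero_act (ζ : Θ.StrongZero) {A K W : B} (ν : Θ.H K W) (a : A ⟶ ζ.Z) (μ : Θ.H ζ.Z W) :
    Θ.act (ζ.zero A K) ν (𝟙 W) = Θ.act a μ (𝟙 W) := by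
  have h1 : Θ.act (ζ.zero A K) ν (𝟙 W)
      = Θ.act (ζ.isZero.from_ A) (Θ.act (ζ.isZero.to_ K) ν (𝟙 W)) (𝟙 W) := by
    rw [StrongZero.zero, act_splitL]
  rw [h1, ζ.fromZ_uniq _ (Θ.act (ζ.isZero.to_ K) ν (𝟙 W)), ← ζ.fromZ_uniq _ μ,
    ζ.isZero.eq_of_tgt (ζ.isZero.from_ A) a]

/-- Arrows into the Θ-kernel of an arrow out of the zero object are determined by their
action on the kernel nullhomotopy. -/
lemma ker_hom_ext (ζ : Θ.StrongZero) {K W A : B} {g : ζ.Z ⟶ W} {n : K ⟶ ζ.Z} {ν : Θ.H K W}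
    (hk : Θ.IsKer g n ν) (w₁ w₂ : A ⟶ K)
    (h : Θ.act w₁ ν (𝟙 W) = Θ.act w₂ ν (𝟙 W)) : w₁ = w₂ := by
  obtain ⟨w, -, huniq⟩ := hk.lift (w₁ ≫ n) (Θ.act w₁ ν (𝟙 W))
    (by rw [Θ.ar_act, hk.ar_eq]; simp)
  have h1 := huniq w₁ ⟨rfl, rfl⟩
  have h2 := huniq w₂ ⟨ζ.isZero.eq_of_tgt _ _, h.symm⟩
  rw [h1, h2]

end Helpers

/-- The homotopy snail sequence: consecutive composites are zero.
Let `(B, Θ)` satisfy the reduced interchange condition, with a Θ-strong zero object `ζ`,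
strong Θ-kernels of all arrows and strong Θ-cokernels of all terminal arrows.  For an
arrow `g : X ⟶ Y` with strong Θ-kernel `(N(g), n_g, ν_g)`, given the Θ-kernels of the
initial arrows of `N(g)`, `X`, `Y`, the `π₀`-data of `N(g)`, `X`, `Y` (Θ-cokernel of the
terminal arrow followed by the Θ-kernel of its arrow part, with canonical arrow `η`), and
the arrows `n(n_g)`, `n(g)`, `Δ` (hence `δ = Δ ≫ η`), `c(n_g)`, `π₀(n_g)`, `c(g)`,
`π₀(g)` characterized by their universal equations, each pair of consecutive arrows of the
snail sequence
`N(0_{N(g)}) ⟶ N(0_X) ⟶ N(0_Y) ⟶ π₀(N(g)) ⟶ π₀(X) ⟶ π₀(Y)`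
composes to the zero arrow. -/
theorem snail_sequence_composites_zero
    {B : Type u} [Category.{v} B] (Θ : NullStruct B)
    (hRI : Θ.ReducedInterchange) (ζ : Θ.StrongZero)
    (hK : ∀ (X Y : B) (g : X ⟶ Y), ∃ (N : B) (n : N ⟶ X) (ν : Θ.H N Y), Θ.IsStrongKer g n ν)
    (hC : ∀ (Y : B), ∃ (Q : B) (c : ζ.Z ⟶ Q) (γ : Θ.H Y Q),
        Θ.IsStrongCoker (ζ.isZero.from_ Y) c γ)
    -- the arrow `g` and its strong Θ-kernel
    {X Y : B} (g : X ⟶ Y)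
    {Ng : B} (ng : Ng ⟶ X) (νg : Θ.H Ng Y) (hg : Θ.IsStrongKer g ng νg)
    -- strong Θ-kernels of the initial arrows of `N(g)`, `X`, `Y`
    {KN : B} (kN : KN ⟶ ζ.Z) (νN : Θ.H KN Ng) (hkN : Θ.IsStrongKer (ζ.isZero.to_ Ng) kN νN)
    {KX : B} (kX : KX ⟶ ζ.Z) (νX : Θ.H KX X) (hkX : Θ.IsStrongKer (ζ.isZero.to_ X) kX νX)
    {KY : B} (kY : KY ⟶ ζ.Z) (νY : Θ.H KY Y) (hkY : Θ.IsStrongKer (ζ.isZero.to_ Y) kY νY)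
    -- `π₀`-data of `N(g)`
    {CN : B} (cN : ζ.Z ⟶ CN) (γN : Θ.H Ng CN)
    (hcN : Θ.IsStrongCoker (ζ.isZero.from_ Ng) cN γN)
    {PN : B} (pN : PN ⟶ ζ.Z) (μN : Θ.H PN CN) (hpN : Θ.IsStrongKer cN pN μN)
    (ηN : Ng ⟶ PN) (hηN : Θ.act ηN μN (𝟙 CN) = γN)
    -- `π₀`-data of `X`
    {CX : B} (cX : ζ.Z ⟶ CX) (γX : Θ.H X CX)
    (hcX : Θ.IsStrongCoker (ζ.isZero.from_ X) cX γX)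
    {PX : B} (pX : PX ⟶ ζ.Z) (μX : Θ.H PX CX) (hpX : Θ.IsStrongKer cX pX μX)
    (ηX : X ⟶ PX) (hηX : Θ.act ηX μX (𝟙 CX) = γX)
    -- `π₀`-data of `Y`
    {CY : B} (cY : ζ.Z ⟶ CY) (γY : Θ.H Y CY)
    (hcY : Θ.IsStrongCoker (ζ.isZero.from_ Y) cY γY)
    {PY : B} (pY : PY ⟶ ζ.Z) (μY : Θ.H PY CY) (hpY : Θ.IsStrongKer cY pY μY)
    (ηY : Y ⟶ PY) (hηY : Θ.act ηY μY (𝟙 CY) = γY)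
    -- the arrows of the snail sequence
    (nng : KN ⟶ KX) (hnng₀ : nng ≫ kX = kN)
    (hnng : Θ.act nng νX (𝟙 X) = Θ.act (𝟙 KN) νN ng)
    (nmg : KX ⟶ KY) (hnmg₀ : nmg ≫ kY = kX)
    (hnmg : Θ.act nmg νY (𝟙 Y) = Θ.act (𝟙 KX) νX g)
    (Δ : KY ⟶ Ng) (hΔ₀ : Δ ≫ ng = ζ.zero KY X) (hΔ : Θ.act Δ νg (𝟙 Y) = νY)
    (cng : CN ⟶ CX) (hcng₀ : cN ≫ cng = cX)
    (hcng : Θ.act (𝟙 Ng) γN cng = Θ.act ng γX (𝟙 CX))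
    (png : PN ⟶ PX) (hpng₀ : png ≫ pX = pN)
    (hpng : Θ.act png μX (𝟙 CX) = Θ.act (𝟙 PN) μN cng)
    (cg : CX ⟶ CY) (hcg₀ : cX ≫ cg = cY)
    (hcg : Θ.act (𝟙 X) γX cg = Θ.act g γY (𝟙 CY))
    (pg : PX ⟶ PY) (hpg₀ : pg ≫ pY = pX)
    (hpg : Θ.act pg μY (𝟙 CY) = Θ.act (𝟙 PX) μX cg) :
    nng ≫ nmg = ζ.zero KN KY ∧
    nmg ≫ Δ ≫ ηN = ζ.zero KX PN ∧
    (Δ ≫ ηN) ≫ png = ζ.zero KY PX ∧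
    png ≫ pg = ζ.zero PN PY := by
  refine ⟨?_, ?_, ?_, ?_⟩
  · -- `nng ≫ nmg = 0`
    apply ker_hom_ext ζ hkY.toIsKer
    calc Θ.act (nng ≫ nmg) νY (𝟙 Y)
        = Θ.act nng (Θ.act nmg νY (𝟙 Y)) (𝟙 Y) := act_splitL ..
      _ = Θ.act nng (Θ.act (𝟙 KX) νX g) (𝟙 Y) := by rw [hnmg]
      _ = Θ.act nng νX g := by rw [act_fuse]; simp
      _ = Θ.act (𝟙 KN) (Θ.act nng νX (𝟙 X)) g := by
            rw [act_fuse]; simp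
      _ = Θ.act (𝟙 KN) (Θ.act (𝟙 KN) νN ng) g := by rw [hnng]
      _ = Θ.act (𝟙 KN) νN (ng ≫ g) := by rw [act_fuse]; simp
      _ = Θ.act (Θ.ar νN) νg (𝟙 Y) := hRI _ _ νN νg rfl hg.ar_eq
      _ = Θ.act kN (Θ.act (ζ.isZero.to_ Ng) νg (𝟙 Y)) (𝟙 Y) := by
            rw [hkN.ar_eq, act_splitL]
      _ = Θ.act kN (ζ.fromZ Y) (𝟙 Y) := by
            rw [ζ.fromZ_uniq _ (Θ.act (ζ.isZero.to_ Ng) νg (𝟙 Y))]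
      _ = Θ.act (ζ.zero KN KY) νY (𝟙 Y) := (zero_act ζ νY kN (ζ.fromZ Y)).symm
  · -- `nmg ≫ δ = 0`
    -- first produce a nullhomotopy `α` on `nmg ≫ Δ` using the strong kernel of `g`
    obtain ⟨α, ⟨hαar, -⟩, -⟩ := hg.liftH (nmg ≫ Δ) νX
      (by
        rw [hkX.ar_eq, Category.assoc, hΔ₀, StrongZero.zero, ← Category.assoc,
          ζ.isZero.eq_of_tgt (nmg ≫ ζ.isZero.from_ KY) kX])
      (by
        calc Θ.act (𝟙 KX) νX g
            = Θ.act nmg νY (𝟙 Y) := (hnmg).symm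
          _ = Θ.act nmg (Θ.act Δ νg (𝟙 Y)) (𝟙 Y) := by rw [hΔ]
          _ = Θ.act (nmg ≫ Δ) νg (𝟙 Y) := by rw [act_fuse]; simp)
    apply ker_hom_ext ζ hpN.toIsKer
    calc Θ.act (nmg ≫ Δ ≫ ηN) μN (𝟙 CN)
        = Θ.act (nmg ≫ Δ) (Θ.act ηN μN (𝟙 CN)) (𝟙 CN) := by
            rw [← Category.assoc, act_splitL]
      _ = Θ.act (nmg ≫ Δ) γN (𝟙 CN) := by rw [hηN]
      _ = Θ.act (𝟙 KX) α (Θ.ar γN) := (hRI _ _ α γN hαar rfl).symm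
      _ = Θ.act (𝟙 KX) (Θ.act (𝟙 KX) α (ζ.isZero.from_ Ng)) cN := by
            rw [hcN.ar_eq, act_splitR]
      _ = Θ.act (𝟙 KX) (ζ.toZ KX) cN := by
            rw [← ζ.toZ_uniq _ (Θ.act (𝟙 KX) α (ζ.isZero.from_ Ng))]
      _ = Θ.act (ζ.isZero.from_ KX) (ζ.fromZ CN) (𝟙 CN) :=
            act_cross hRI ζ (ζ.toZ KX) (ζ.fromZ CN) _ cN
      _ = Θ.act (ζ.zero KX PN) μN (𝟙 CN) :=
            (zero_act ζ μN (ζ.isZero.from_ KX) (ζ.fromZ CN)).symm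
  · -- `δ ≫ π₀(n_g) = 0`
    apply ker_hom_ext ζ hpX.toIsKer
    calc Θ.act ((Δ ≫ ηN) ≫ png) μX (𝟙 CX)
        = Θ.act (Δ ≫ ηN) (Θ.act png μX (𝟙 CX)) (𝟙 CX) := act_splitL ..
      _ = Θ.act (Δ ≫ ηN) (Θ.act (𝟙 PN) μN cng) (𝟙 CX) := by rw [hpng]
      _ = Θ.act Δ (Θ.act ηN μN (𝟙 CN)) cng := by
            rw [act_fuse, act_fuse]; simp
      _ = Θ.act Δ γN cng := by rw [hηN]
      _ = Θ.act Δ (Θ.act (𝟙 Ng) γN cng) (𝟙 CX) := by rw [act_fuse]; simp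
      _ = Θ.act Δ (Θ.act ng γX (𝟙 CX)) (𝟙 CX) := by rw [hcng]
      _ = Θ.act (Δ ≫ ng) γX (𝟙 CX) := by rw [act_fuse]; simp
      _ = Θ.act (ζ.zero KY X) γX (𝟙 CX) := by rw [hΔ₀]
      _ = Θ.act (ζ.isZero.from_ KY) (ζ.fromZ CX) (𝟙 CX) :=
            zero_act ζ γX (ζ.isZero.from_ KY) (ζ.fromZ CX)
      _ = Θ.act (ζ.zero KY PX) μX (𝟙 CX) :=
            (zero_act ζ μX (ζ.isZero.from_ KY) (ζ.fromZ CX)).symm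
  · -- `π₀(n_g) ≫ π₀(g) = 0`
    -- first produce a nullhomotopy `β` on `cng ≫ cg` using the strong cokernel of `0^{N(g)}`
    obtain ⟨β, ⟨hβar, -⟩, -⟩ := hcN.descH (cng ≫ cg) (ζ.fromZ CY)
      (ζ.isZero.eq_of_src _ _)
      (by
        calc Θ.act (ζ.isZero.from_ Ng) (ζ.fromZ CY) (𝟙 CY)
            = Θ.act (𝟙 Ng) (ζ.toZ Ng) cY :=
              (act_cross hRI ζ (ζ.toZ Ng) (ζ.fromZ CY) (ζ.isZero.from_ Ng) cY).symm
          _ = Θ.act (𝟙 Ng) (Θ.act (𝟙 Ng) νg (ζ.isZero.from_ Y)) cY := by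
              rw [← ζ.toZ_uniq _ (Θ.act (𝟙 Ng) νg (ζ.isZero.from_ Y))]
          _ = Θ.act (𝟙 Ng) νg (Θ.ar γY) := by rw [hcY.ar_eq, act_splitR]
          _ = Θ.act (Θ.ar νg) γY (𝟙 CY) := hRI _ _ νg γY rfl rfl
          _ = Θ.act (ng ≫ g) γY (𝟙 CY) := by rw [hg.ar_eq]
          _ = Θ.act ng (Θ.act g γY (𝟙 CY)) (𝟙 CY) := act_splitL ..
          _ = Θ.act ng (Θ.act (𝟙 X) γX cg) (𝟙 CY) := by rw [hcg]
          _ = Θ.act (𝟙 Ng) (Θ.act ng γX (𝟙 CX)) cg := by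
              rw [act_fuse, act_fuse]; simp
          _ = Θ.act (𝟙 Ng) (Θ.act (𝟙 Ng) γN cng) cg := by rw [hcng]
          _ = Θ.act (𝟙 Ng) γN (cng ≫ cg) := by rw [act_fuse]; simp)
    apply ker_hom_ext ζ hpY.toIsKer
    calc Θ.act (png ≫ pg) μY (𝟙 CY)
        = Θ.act png (Θ.act pg μY (𝟙 CY)) (𝟙 CY) := act_splitL ..
      _ = Θ.act png (Θ.act (𝟙 PX) μX cg) (𝟙 CY) := by rw [hpg]
      _ = Θ.act (𝟙 PN) (Θ.act png μX (𝟙 CX)) cg := by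
            rw [act_fuse, act_fuse]; simp
      _ = Θ.act (𝟙 PN) (Θ.act (𝟙 PN) μN cng) cg := by rw [hpng]
      _ = Θ.act (𝟙 PN) μN (cng ≫ cg) := by rw [act_fuse]; simp
      _ = Θ.act (Θ.ar μN) β (𝟙 CY) := hRI _ _ μN β rfl hβar
      _ = Θ.act pN (Θ.act cN β (𝟙 CY)) (𝟙 CY) := by rw [hpN.ar_eq, act_splitL]
      _ = Θ.act pN (ζ.fromZ CY) (𝟙 CY) := by
            rw [ζ.fromZ_uniq _ (Θ.act cN β (𝟙 CY))]
      _ = Θ.act (ζ.zero PN PY) μY (𝟙 CY) := (zero_act ζ μY pN (ζ.fromZ CY)).symm
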